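/- Let R > 0, C₁ > 0, and for n ≥ 1 let E_n = {(r,ψ) ∈ ℝ × ℝ : C₁/(n+1) ≤ ψ ≤ C₁/n}. Define g : E_n → ℝ by g(r,ψ) = n R sin ψ. Then there is a constant C₂ = R C₁^{1/2}, independent of n, such that |g(r₁,ψ₁) - g(r₂,ψ₂)| ≤ C₂ |ψ₁ - ψ₂|^{1/2} for all (r₁,ψ₁), (r₂,ψ₂) ∈ E_n. -/
import Mathlib


/-- The sliding time g(r,ψ) = nR sin ψ is Hölder with exponent 1/2 on the cell
E_n = {C₁/(n+1) ≤ ψ ≤ C₁/n}, with constant C₂ = R C₁^{1/2} independent of n. -/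
theorem stmt_4 (R C₁ : ℝ) (hR : 0 < R) (hC₁ : 0 < C₁) (n : ℕ) (hn : 1 ≤ n)
    (En : Set (ℝ × ℝ))
    (hEn : En = {p : ℝ × ℝ | C₁ / (n + 1) ≤ p.2 ∧ p.2 ≤ C₁ / n})
    (g : ℝ × ℝ → ℝ) (hg : ∀ p : ℝ × ℝ, g p = (n : ℝ) * R * Real.sin p.2) :
    ∀ x₁ ∈ En, ∀ x₂ ∈ En,
      |g x₁ - g x₂| ≤ R * C₁ ^ ((1:ℝ)/2) * |x₁.2 - x₂.2| ^ ((1:ℝ)/2) := by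
  subst hEn
  intro x₁ h₁ x₂ h₂
  obtain ⟨ha1, ha2⟩ := h₁
  obtain ⟨hb1, hb2⟩ := h₂
  set a := x₁.2 with ha
  set b := x₂.2 with hb
  have hnpos : (0:ℝ) < n := by exact_mod_cast Nat.pos_of_ne_zero (by omega)
  set d := |a - b| with hd
  have hd0 : 0 ≤ d := abs_nonneg _
  have hdle : d ≤ C₁ / n - C₁ / (n + 1) := by
    rw [hd, abs_sub_le_iff]; constructor <;> linarith
  have hn2d : (n:ℝ)^2 * d ≤ C₁ := by
    have h1 : (n:ℝ)^2 * (C₁ / n - C₁ / (n+1)) ≤ C₁ := by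
      rw [← sub_nonneg]
      have key : C₁ - (n:ℝ)^2 * (C₁ / n - C₁ / (n+1))
          = C₁ / (n * (n+1)) * n := by
        field_simp; ring
      rw [key]; positivity
    nlinarith
  have hsqrt : (n:ℝ) * Real.sqrt d ≤ Real.sqrt C₁ := by
    have h2 : Real.sqrt ((n:ℝ)^2 * d) ≤ Real.sqrt C₁ := Real.sqrt_le_sqrt hn2d
    rwa [Real.sqrt_mul (by positivity), Real.sqrt_sq hnpos.le] at h2
  have hsin : |Real.sin a - Real.sin b| ≤ d := by
    rw [Real.sin_sub_sin, hd]
    calc |2 * Real.sin ((a - b) / 2) * Real.cos ((a + b) / 2)|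
        = 2 * |Real.sin ((a - b) / 2)| * |Real.cos ((a + b) / 2)| := by
          rw [abs_mul, abs_mul]; norm_num
      _ ≤ 2 * |(a - b) / 2| * 1 :=
          mul_le_mul (mul_le_mul_of_nonneg_left Real.abs_sin_le_abs (by norm_num))
            (Real.abs_cos_le_one _) (abs_nonneg _) (by positivity)
      _ = |a - b| := by rw [mul_one, abs_div, abs_two]; ring
  rw [hg, hg, ← mul_sub, abs_mul, abs_of_nonneg (by positivity : (0:ℝ) ≤ (n:ℝ)*R),
    ← Real.sqrt_eq_rpow, ← Real.sqrt_eq_rpow]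
  have hds : d = Real.sqrt d * Real.sqrt d := (Real.mul_self_sqrt hd0).symm
  calc (n:ℝ) * R * |Real.sin a - Real.sin b| ≤ (n:ℝ) * R * d := by gcongr
    _ = R * ((n:ℝ) * Real.sqrt d) * Real.sqrt d := by
        conv_lhs => rw [← Real.mul_self_sqrt hd0]
        ring
    _ ≤ R * Real.sqrt C₁ * Real.sqrt d := by gcongr
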